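/- In the Jessen-type construction at scale n ≥ 2 on T^ω, the union C_n = ⋃_α Q_α of all principal k-cells (pairwise disjoint translated cubes Q_α = y(α) + □_{m(α),n} with disjoint sacks) satisfies m(C_n) = 1/(n+1): indeed m(C_n) = 2^{n(n−1)} · 2^{−n²} · Σ_{k=0}^∞ ((2^n − (n+1))/2^n)^k = 1/(n+1), and the complement of the union of the sacks, N_n = T^ω \ ⋃_α S(Q_α), is a null set. -/

import Mathlib

open MeasureTheory Filter Topology Pointwise

/-- The infinite torus `T^ω`, the countable product of circles `T = ℝ/ℤ`. -/
abbrev Tomega : Type := ℕ → AddCircle (1 : ℝ)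

/-- The open arc of the circle `T = ℝ/ℤ` which is the image of the interval `(a, b) ⊂ ℝ`. -/
def arc (a b : ℝ) : Set (AddCircle (1 : ℝ)) :=
  (fun t : ℝ => (t : AddCircle (1 : ℝ))) '' Set.Ioo a b

/-- The subgroup `R_k = {0, 1/k, …, (k-1)/k}` of `k`-th roots of unity in `T = ℝ/ℤ`. -/
noncomputable def Rsub (k : ℕ) : AddSubgroup (AddCircle (1 : ℝ)) :=
  AddSubgroup.zmultiples (((k : ℝ)⁻¹ : ℝ) : AddCircle (1 : ℝ))

/-- The exponent pattern of the Rubio de Francia construction: for `m = n² + j` with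
`1 ≤ j ≤ 2n+1` (so `n = Nat.sqrt (m-1)`), the `i`-th coordinate (0-indexed) of `H_m` is
`R_{2^(rdfExp m i)}` and the `i`-th edge of `V_m` is `(0, 2^{-(rdfExp m i)})`; coordinates
with exponent `0` carry the trivial subgroup `{0}`, resp. the full circle `T`. -/
def rdfExp (m i : ℕ) : ℕ :=
  let n := Nat.sqrt (m - 1)
  let j := m - n ^ 2
  if j ≤ n then (if i < n then n else if i = n then j else 0)
  else (if i < j - n then n + 1 else if i ≤ n then n else 0)

/-- The finite subgroup `H_m` of `T^ω` of the Rubio de Francia construction. -/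
noncomputable def Hgrp (m : ℕ) : AddSubgroup Tomega :=
  AddSubgroup.pi Set.univ fun i => Rsub (2 ^ rdfExp m i)

/-- The fundamental domain `V_m` for `T^ω / H_m` of the Rubio de Francia construction. -/
def Vset (m : ℕ) : Set Tomega :=
  {x | ∀ i, rdfExp m i ≠ 0 → x i ∈ arc 0 ((2 : ℝ) ^ rdfExp m i)⁻¹}

/-- The `(m,q)`-cube `□_{m,q} = (0, 2^{-m})^q × T^{q,ω}` in `T^ω`. -/
def cubeSet (m q : ℕ) : Set Tomega := {x | ∀ i < q, x i ∈ arc 0 ((2 : ℝ) ^ m)⁻¹}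

/-- The element of `T^ω` whose `j`-th coordinate is `2^{-m}` and all other coordinates `0`;
adding it realizes the translation `τ_j^m`. -/
noncomputable def tauPt (m j : ℕ) : Tomega :=
  fun i => if i = j then ((((2 : ℝ) ^ m)⁻¹ : ℝ) : AddCircle (1 : ℝ)) else 0

/-- The sack `S(Q) = Q ∪ ⋃_{j<q} τ_j^m(Q)` of a set `Q` (0-indexed coordinates `j < q`). -/
def sack (m q : ℕ) (Q : Set Tomega) : Set Tomega := Q ∪ ⋃ j < q, tauPt m j +ᵥ Q

/-- The double `(m,m)`-cube `W_{m,r} = □_{m,m} ∪ τ_r^m(□_{m,m})` (0-indexed `r < m`). -/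
def Wcube (m r : ℕ) : Set Tomega := cubeSet m m ∪ (tauPt m r +ᵥ cubeSet m m)

/-- The extended Rubio de Francia basis `ℛ*`: all translates of the fundamental domains
`V_n` together with all translates of the double cubes `W_{m,r}`. -/
def RStar : Set (Set Tomega) :=
  {S | ∃ y : Tomega, ∃ n : ℕ, 1 ≤ n ∧ S = y +ᵥ Vset n} ∪
  {S | ∃ y : Tomega, ∃ m r : ℕ, 2 ≤ m ∧ r < m ∧ S = y +ᵥ Wcube m r}

/- ===== auxiliary development ===== -/

noncomputable section JessenAux

/-- Canonical representative in `[0,1)` of a point on the circle. -/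
def repc (x : AddCircle (1:ℝ)) : ℝ := (AddCircle.equivIco 1 0 x : ℝ)

lemma repc_mem (x : AddCircle (1:ℝ)) : repc x ∈ Set.Ico (0:ℝ) 1 := by
  have := (AddCircle.equivIco 1 0 x).2; simpa [repc] using this

lemma coe_repc (x : AddCircle (1:ℝ)) : ((repc x : ℝ) : AddCircle (1:ℝ)) = x := by
  change ((AddCircle.equivIco 1 0).symm (AddCircle.equivIco 1 0 x) : AddCircle (1:ℝ)) = x
  rw [Equiv.symm_apply_apply]

lemma repc_coe {t : ℝ} (ht : t ∈ Set.Ico (0:ℝ) 1) : repc (t : AddCircle (1:ℝ)) = t := by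
  unfold repc AddCircle.equivIco
  rw [QuotientAddGroup.equivIcoMod_coe]
  exact (toIcoMod_eq_self _).mpr (by simpa using ht)

lemma repc_measurable : Measurable repc := by
  have : repc = (fun y : Set.Ico (0:ℝ) (0+1) => (y : ℝ)) ∘ (AddCircle.measurableEquivIco (1:ℝ) 0) := by
    funext x; rfl
  rw [this]
  exact measurable_subtype_coe.comp (AddCircle.measurableEquivIco (1:ℝ) 0).measurable

lemma mem_coe_vadd_arc {c d : ℝ} (hc : 0 ≤ c) (h1 : c + d ≤ 1) (x : AddCircle (1:ℝ)) :
    x ∈ (↑c : AddCircle (1:ℝ)) +ᵥ arc 0 d ↔ repc x ∈ Set.Ioo c (c + d) := by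
  constructor
  · rintro ⟨z, ⟨t, ht, rfl⟩, rfl⟩
    have h : (↑c : AddCircle (1:ℝ)) +ᵥ (↑t : AddCircle (1:ℝ)) = ((c + t : ℝ) : AddCircle (1:ℝ)) := by
      push_cast; rfl
    show repc ((↑c : AddCircle (1:ℝ)) +ᵥ ((t:ℝ) : AddCircle (1:ℝ))) ∈ Set.Ioo c (c+d)
    rw [h, repc_coe ⟨by linarith [ht.1], by linarith [ht.2]⟩]
    exact ⟨by linarith [ht.1], by linarith [ht.2]⟩
  · intro h
    refine ⟨((repc x - c : ℝ) : AddCircle (1:ℝ)), ⟨repc x - c, ⟨by linarith [h.1], by linarith [h.2]⟩, rfl⟩, ?_⟩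
    have : (↑c : AddCircle (1:ℝ)) +ᵥ ((repc x - c : ℝ) : AddCircle (1:ℝ)) = ((repc x : ℝ) : AddCircle (1:ℝ)) := by
      show (↑c : AddCircle (1:ℝ)) + _ = _
      rw [← AddCircle.coe_add]; ring_nf
    show (↑c : AddCircle (1:ℝ)) +ᵥ ((repc x - c : ℝ) : AddCircle (1:ℝ)) = x
    rw [this, coe_repc]

/-- The grid point whose first `n` coordinates are `a i · 2^{-M}`. -/
def gpt (n M : ℕ) (a : Fin n → ℕ) : Tomega :=
  fun i => if h : i < n then (((a ⟨i, h⟩ : ℝ) * ((2:ℝ)^M)⁻¹ : ℝ) : AddCircle (1:ℝ)) else 0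

lemma gpt_apply {n M : ℕ} (a : Fin n → ℕ) (i : Fin n) :
    gpt n M a (i : ℕ) = (((a i : ℝ) * ((2:ℝ)^M)⁻¹ : ℝ) : AddCircle (1:ℝ)) := by
  simp [gpt, i.isLt]

lemma mem_gpt_vadd_cube {n M : ℕ} {a : Fin n → ℕ} (hb : ∀ i, a i + 1 ≤ 2^M) (x : Tomega) :
    x ∈ gpt n M a +ᵥ cubeSet M n ↔
    ∀ i : Fin n, repc (x i) ∈
      Set.Ioo ((a i : ℝ) * ((2:ℝ)^M)⁻¹) (((a i : ℝ) + 1) * ((2:ℝ)^M)⁻¹) := by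
  rw [Set.mem_vadd_set_iff_neg_vadd_mem]
  have key : ∀ i : Fin n, ((-(gpt n M a) + x) (i : ℕ) ∈ arc 0 ((2:ℝ)^M)⁻¹ ↔
      repc (x i) ∈ Set.Ioo ((a i : ℝ) * ((2:ℝ)^M)⁻¹) (((a i : ℝ) + 1) * ((2:ℝ)^M)⁻¹)) := by
    intro i
    have hg : gpt n M a (i : ℕ) = (((a i : ℝ) * ((2:ℝ)^M)⁻¹ : ℝ) : AddCircle (1:ℝ)) := gpt_apply a i
    have hmem : (-(gpt n M a) + x) (i : ℕ) ∈ arc 0 ((2:ℝ)^M)⁻¹ ↔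
        x i ∈ gpt n M a (i : ℕ) +ᵥ arc 0 ((2:ℝ)^M)⁻¹ := by
      rw [Set.mem_vadd_set_iff_neg_vadd_mem]; rfl
    rw [hmem, hg, mem_coe_vadd_arc (by positivity) ?h1]
    · constructor <;> intro h <;>
        · refine ⟨h.1, ?_⟩
          have := h.2; nlinarith [this]
    case h1 =>
      have h2 : ((a i : ℝ) + 1) ≤ 2^M := by exact_mod_cast hb i
      have h3 : ((a i : ℝ) + 1) * ((2:ℝ)^M)⁻¹ ≤ (2:ℝ)^M * ((2:ℝ)^M)⁻¹ :=
        mul_le_mul_of_nonneg_right h2 (by positivity)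
      rw [mul_inv_cancel₀ (by positivity)] at h3
      nlinarith [h3]
  constructor
  · intro h i; exact (key i).mp (h (i : ℕ) i.isLt)
  · intro h i hi; exact (key ⟨i, hi⟩).mpr (h ⟨i, hi⟩)

/-- The half-open dyadic cube of edge `2^{-M}` with corner `a·2^{-M}`. -/
def Dset (n M : ℕ) (a : Fin n → ℕ) : Set Tomega :=
  {x | ∀ i : Fin n, repc (x i) ∈ Set.Ico ((a i : ℝ) * ((2:ℝ)^M)⁻¹) (((a i : ℝ) + 1) * ((2:ℝ)^M)⁻¹)}

lemma Dset_measurable (n M : ℕ) (a : Fin n → ℕ) : MeasurableSet (Dset n M a) := by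
  have : Dset n M a = ⋂ i : Fin n,
      (fun x : Tomega => repc (x (i : ℕ))) ⁻¹' (Set.Ico ((a i : ℝ) * ((2:ℝ)^M)⁻¹) (((a i : ℝ) + 1) * ((2:ℝ)^M)⁻¹)) := by
    ext x; simp [Dset]
  rw [this]
  exact MeasurableSet.iInter fun i => measurableSet_Ico.preimage
    (repc_measurable.comp (measurable_pi_apply _))

lemma Dset_disjoint {n M : ℕ} {a b : Fin n → ℕ} (hab : a ≠ b) :
    Disjoint (Dset n M a) (Dset n M b) := by
  rw [Set.disjoint_left]
  intro x hxa hxb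
  obtain ⟨i, hi⟩ : ∃ i, a i ≠ b i := by
    by_contra h; push_neg at h; exact hab (funext h)
  obtain ⟨l1, r1⟩ := hxa i
  obtain ⟨l2, r2⟩ := hxb i
  have hδ : (0:ℝ) < ((2:ℝ)^M)⁻¹ := by positivity
  rcases Nat.lt_or_ge (a i) (b i) with h | h
  · have : ((a i : ℝ) + 1) ≤ (b i : ℝ) := by exact_mod_cast h
    nlinarith
  · have h' : b i < a i := lt_of_le_of_ne h (Ne.symm hi)
    nlinarith [show ((b i : ℝ) + 1) ≤ (a i : ℝ) from by exact_mod_cast h']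

lemma Dset_cover (n M : ℕ) (x : Tomega) :
    ∃ a ∈ Fintype.piFinset (fun _ : Fin n => Finset.range (2^M)), x ∈ Dset n M a := by
  refine ⟨fun i => ⌊repc (x i) * 2^M⌋₊, ?_, ?_⟩
  · rw [Fintype.mem_piFinset]
    intro i
    have h1 := (repc_mem (x i)).2
    have h0 := (repc_mem (x i)).1
    have h2 : (0:ℝ) < 2^M := by positivity
    rw [Finset.mem_range, Nat.floor_lt (by nlinarith)]
    push_cast
    nlinarith
  · intro i
    have h0 : 0 ≤ repc (x (i:ℕ)) := (repc_mem _).1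
    have h2 : (0:ℝ) < 2^M := by positivity
    have hfl := Nat.floor_le (show 0 ≤ repc (x (i:ℕ)) * 2^M by positivity)
    have hfu := Nat.lt_floor_add_one (repc (x (i:ℕ)) * 2^M)
    constructor
    · have h3 := mul_le_mul_of_nonneg_right hfl (le_of_lt (inv_pos.2 h2))
      rwa [mul_assoc, mul_inv_cancel₀ (ne_of_gt h2), mul_one] at h3
    · have h3 := mul_lt_mul_of_pos_right hfu (inv_pos.2 h2)
      rwa [mul_assoc, mul_inv_cancel₀ (ne_of_gt h2), mul_one] at h3

lemma Dset_vadd {n M : ℕ} {a : Fin n → ℕ} (ha : ∀ i, a i + 1 ≤ 2^M) :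
    gpt n M a +ᵥ Dset n M (fun _ => 0) = Dset n M a := by
  have hub : ∀ i : Fin n, ((a i : ℝ) + 1) * ((2:ℝ)^M)⁻¹ ≤ 1 := by
    intro i
    have h2 : ((a i : ℝ) + 1) ≤ 2^M := by exact_mod_cast ha i
    have h3 : ((a i : ℝ) + 1) * ((2:ℝ)^M)⁻¹ ≤ (2:ℝ)^M * ((2:ℝ)^M)⁻¹ :=
      mul_le_mul_of_nonneg_right h2 (by positivity)
    rwa [mul_inv_cancel₀ (by positivity)] at h3
  have hδ : (0:ℝ) < ((2:ℝ)^M)⁻¹ := by positivity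
  have hann : ∀ i : Fin n, (0:ℝ) ≤ (a i : ℝ) * ((2:ℝ)^M)⁻¹ := fun i => by positivity
  ext x
  rw [Set.mem_vadd_set_iff_neg_vadd_mem]
  constructor
  · intro h i
    have hi := h i
    simp only [Dset, Set.mem_setOf_eq, Nat.cast_zero, zero_mul, zero_add, one_mul, vadd_eq_add] at hi
    obtain ⟨hs0, hs1⟩ := hi
    set s := repc ((-(gpt n M a) + x) (i : ℕ)) with hs
    have hxi : x (i : ℕ) = (((a i : ℝ) * ((2:ℝ)^M)⁻¹ + s : ℝ) : AddCircle (1:ℝ)) := by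
      have h1 : ((-(gpt n M a) + x) (i:ℕ) : AddCircle (1:ℝ)) = ((s:ℝ) : AddCircle (1:ℝ)) := (coe_repc _).symm
      have h2 : x (i:ℕ) = gpt n M a (i:ℕ) + ((-(gpt n M a) + x) (i:ℕ)) := by
        simp [Pi.add_apply, Pi.neg_apply]
      rw [h2, h1, gpt_apply, ← AddCircle.coe_add]
    rw [hxi, repc_coe ⟨by nlinarith [hann i], by nlinarith [hub i]⟩]
    exact ⟨by nlinarith, by nlinarith⟩
  · intro h i
    have hi := h i
    simp only [Dset, Set.mem_setOf_eq, Nat.cast_zero, zero_mul, zero_add, one_mul, vadd_eq_add]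
    obtain ⟨hr0, hr1⟩ := hi
    have hxr := repc_mem (x (i:ℕ))
    have key : (-(gpt n M a) + x) (i:ℕ) = ((repc (x (i:ℕ)) - (a i : ℝ) * ((2:ℝ)^M)⁻¹ : ℝ) : AddCircle (1:ℝ)) := by
      have h2 : (-(gpt n M a) + x) (i:ℕ) = -(gpt n M a (i:ℕ)) + x (i:ℕ) := by
        simp [Pi.add_apply, Pi.neg_apply]
      rw [h2, gpt_apply, neg_add_eq_iff_eq_add, ← AddCircle.coe_add,
        show (a i : ℝ) * ((2:ℝ)^M)⁻¹ + (repc (x (i:ℕ)) - (a i : ℝ) * ((2:ℝ)^M)⁻¹) = repc (x (i:ℕ)) from by ring,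
        coe_repc]
    rw [key, repc_coe ⟨by nlinarith, by nlinarith [hxr.2, hann i]⟩]
    exact ⟨by nlinarith, by nlinarith⟩

lemma measure_Dset (μ : Measure Tomega) [μ.IsAddHaarMeasure] [IsProbabilityMeasure μ]
    {n M : ℕ} {a : Fin n → ℕ} (ha : ∀ i, a i + 1 ≤ 2^M) :
    μ (Dset n M a) = (((2:ENNReal))^(M*n))⁻¹ := by
  have base : ∀ (b : Fin n → ℕ), (∀ i, b i + 1 ≤ 2^M) → μ (Dset n M b) = μ (Dset n M (fun _ => 0)) := by
    intro b hb
    rw [← Dset_vadd hb, measure_vadd]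
  have hsum : ∑ b ∈ Fintype.piFinset (fun _ : Fin n => Finset.range (2^M)), μ (Dset n M b) = 1 := by
    rw [← measure_biUnion_finset ?hd (fun b _ => Dset_measurable n M b)]
    · have : (⋃ b ∈ Fintype.piFinset (fun _ : Fin n => Finset.range (2^M)), Dset n M b) = Set.univ := by
        apply Set.eq_univ_of_forall
        intro x
        obtain ⟨b, hb, hxb⟩ := Dset_cover n M x
        exact Set.mem_biUnion hb hxb
      rw [this]
      exact measure_univ
    case hd => exact fun b _ c _ hbc => Dset_disjoint hbc
  have hmemb : ∀ b ∈ Fintype.piFinset (fun _ : Fin n => Finset.range (2^M)), ∀ i, b i + 1 ≤ 2^M := by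
    intro b hb i
    rw [Fintype.mem_piFinset] at hb
    have := hb i
    rw [Finset.mem_range] at this
    omega
  rw [Finset.sum_congr rfl (fun b hb => (base b (hmemb b hb)).trans rfl)] at hsum
  rw [Finset.sum_const, Fintype.card_piFinset] at hsum
  simp only [Finset.card_range, Finset.prod_const, Finset.card_univ, Fintype.card_fin] at hsum
  have hcard : ((2^M)^n : ℕ) • μ (Dset n M (fun _ => 0)) = ((2:ENNReal)^(M*n)) * μ (Dset n M (fun _ => 0)) := by
    rw [nsmul_eq_mul]
    norm_num [← pow_mul]
  rw [hcard] at hsum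
  have h0 := ENNReal.eq_inv_of_mul_eq_one_left hsum
  rw [base a ha, h0, inv_inv]

lemma hyper_measurable (i : ℕ) (c : AddCircle (1:ℝ)) : MeasurableSet {x : Tomega | x i = c} := by
  have : {x : Tomega | x i = c} = (fun x : Tomega => x i) ⁻¹' {c} := rfl
  rw [this]
  exact (measurableSet_singleton c).preimage (measurable_pi_apply i)

lemma hyper_null (μ : Measure Tomega) [μ.IsAddHaarMeasure] [IsProbabilityMeasure μ]
    (i : ℕ) (c : AddCircle (1:ℝ)) : μ {x : Tomega | x i = c} = 0 := by
  set u : ℕ → ℝ := fun t => 1 / (t + 2) with hu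
  have hu01 : ∀ t : ℕ, u t ∈ Set.Ico (0:ℝ) 1 := by
    intro t
    constructor
    · positivity
    · rw [hu]; rw [div_lt_one (by positivity)]
      have : (0:ℝ) ≤ (t:ℝ) := Nat.cast_nonneg t
      linarith
  set f : ℕ → Tomega := fun t => fun j => if j = i then ((u t : ℝ) : AddCircle (1:ℝ)) else 0 with hf
  set A : ℕ → Set Tomega := fun t => f t +ᵥ {x : Tomega | x i = c} with hA
  have hAt : ∀ t, A t = {x : Tomega | x i = ((u t : ℝ) : AddCircle (1:ℝ)) + c} := by
    intro t
    ext x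
    rw [hA, Set.mem_vadd_set_iff_neg_vadd_mem]
    have hfi : f t i = ((u t : ℝ) : AddCircle (1:ℝ)) := by simp [hf]
    show -(f t i) + x i = c ↔ _
    rw [hfi, neg_add_eq_iff_eq_add]
    rfl
  have hdisj : Pairwise (Function.onFun Disjoint A) := by
    intro s t hst
    rw [Function.onFun, hAt, hAt, Set.disjoint_left]
    intro x hxs hxt
    rw [Set.mem_setOf_eq] at hxs hxt
    have : ((u s : ℝ) : AddCircle (1:ℝ)) = ((u t : ℝ) : AddCircle (1:ℝ)) := by
      have := hxs.symm.trans hxt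
      exact add_right_cancel this
    have h2 : u s = u t := by
      have := congrArg repc this
      rwa [repc_coe (hu01 s), repc_coe (hu01 t)] at this
    rw [hu] at h2
    simp only at h2
    have hs2 : ((s:ℝ)+2) ≠ 0 := by positivity
    have ht2 : ((t:ℝ)+2) ≠ 0 := by positivity
    field_simp at h2
    exact hst (by exact_mod_cast add_right_cancel h2.symm)
  have hsum : ∑' t : ℕ, μ {x : Tomega | x i = c} ≤ 1 := by
    have hv : ∀ t, μ (A t) = μ {x : Tomega | x i = c} := fun t => measure_vadd _ _ _
    calc ∑' t : ℕ, μ {x : Tomega | x i = c} = ∑' t : ℕ, μ (A t) := tsum_congr fun t => (hv t).symm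
      _ = μ (⋃ t, A t) := (measure_iUnion hdisj (fun t => by
            rw [hAt]; exact hyper_measurable i _)).symm
      _ ≤ 1 := prob_le_one
  by_contra h
  rw [ENNReal.tsum_const_eq_top_of_ne_zero h] at hsum
  exact (lt_irrefl _ (lt_of_le_of_lt hsum (by norm_num))).elim

def gridSet : Set Tomega := ⋃ (i : ℕ), ⋃ (q : ℚ), {x : Tomega | x i = ((q : ℝ) : AddCircle (1:ℝ))}

lemma grid_null (μ : Measure Tomega) [μ.IsAddHaarMeasure] [IsProbabilityMeasure μ] :
    μ gridSet = 0 := by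
  rw [gridSet, measure_iUnion_null_iff]
  intro i
  rw [measure_iUnion_null_iff]
  intro q
  exact hyper_null μ i _

/- ===== combinatorics of the recursive subdivision ===== -/

def childOK (n : ℕ) : Finset (Fin n → ℕ) :=
  (Fintype.piFinset fun _ : Fin n => Finset.range 2).filter (fun b => 2 ≤ ∑ i, b i)

def rem (n : ℕ) : ℕ → Finset (Fin n → ℕ)
  | 0 => Fintype.piFinset fun _ : Fin n => Finset.range (2^(n-1))
  | (k+1) => ((rem n k) ×ˢ childOK n).image (fun p => fun i => 2 * p.1 i + p.2 i)

lemma childOK_mem {n : ℕ} {b : Fin n → ℕ} :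
    b ∈ childOK n ↔ (∀ i, b i < 2) ∧ 2 ≤ ∑ i, b i := by
  simp [childOK, Fintype.mem_piFinset]

lemma rem_lt {n : ℕ} : ∀ k, ∀ a ∈ rem n k, ∀ i, a i < 2^(n-1+k) := by
  intro k
  induction k with
  | zero => intro a ha i; rw [rem, Fintype.mem_piFinset] at ha; simpa using ha i
  | succ k ih =>
    intro a ha i
    rw [rem, Finset.mem_image] at ha
    obtain ⟨⟨a', b⟩, hmem, rfl⟩ := ha
    rw [Finset.mem_product] at hmem
    have h1 := ih a' hmem.1 i
    have h2 : b i < 2 := (childOK_mem.mp hmem.2).1 i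
    have h3 : (2:ℕ)^(n-1+(k+1)) = 2^(n-1+k) * 2 := by
      rw [show n-1+(k+1) = (n-1+k)+1 from by omega, pow_succ]
    rw [h3]
    show 2 * a' i + b i < 2^(n-1+k) * 2
    omega

lemma rem_card {n : ℕ} : ∀ k, (rem n k).card ≤ 2^((n-1)*n) * (2^n - 1)^k := by
  have hchild : (childOK n).card ≤ 2^n - 1 := by
    have hsub : childOK n ⊆ (Fintype.piFinset fun _ : Fin n => Finset.range 2).erase (fun _ => 0) := by
      intro b hb
      rw [childOK_mem] at hb
      rw [Finset.mem_erase]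
      refine ⟨?_, by rw [Fintype.mem_piFinset]; intro i; rw [Finset.mem_range]; exact hb.1 i⟩
      intro h
      rw [h] at hb
      simp at hb
    calc (childOK n).card ≤ _ := Finset.card_le_card hsub
      _ = (Fintype.piFinset fun _ : Fin n => Finset.range 2).card - 1 := by
          rw [Finset.card_erase_of_mem]
          rw [Fintype.mem_piFinset]; intro i; simp
      _ = 2^n - 1 := by rw [Fintype.card_piFinset]; simp
  intro k
  induction k with
  | zero =>
    rw [rem, pow_zero, mul_one, Fintype.card_piFinset]
    simp only [Finset.card_range, Finset.prod_const, Finset.card_univ, Fintype.card_fin]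
    rw [← pow_mul]
  | succ k ih =>
    rw [rem]
    calc ((rem n k ×ˢ childOK n).image _).card ≤ (rem n k ×ˢ childOK n).card := Finset.card_image_le
      _ = (rem n k).card * (childOK n).card := Finset.card_product _ _
      _ ≤ (2^((n-1)*n) * (2^n-1)^k) * (2^n - 1) := Nat.mul_le_mul ih hchild
      _ = 2^((n-1)*n) * (2^n-1)^(k+1) := by ring

lemma rem_nonempty {n : ℕ} (hn : 2 ≤ n) : ∀ k, (rem n k).Nonempty := by
  intro k
  induction k with
  | zero => exact ⟨fun _ => 0, by rw [rem, Fintype.mem_piFinset]; intro i; simp [Nat.pow_pos]⟩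
  | succ k ih =>
    obtain ⟨a, ha⟩ := ih
    refine ⟨fun i => 2 * a i + 1, ?_⟩
    rw [rem, Finset.mem_image]
    refine ⟨⟨a, fun _ => 1⟩, ?_, rfl⟩
    rw [Finset.mem_product]
    refine ⟨ha, childOK_mem.mpr ⟨fun i => one_lt_two, ?_⟩⟩
    simp
    omega

lemma rem_eq_of_child {n : ℕ} {a a' : Fin n → ℕ} {b b' : Fin n → ℕ}
    (hb : ∀ i, b i < 2) (hb' : ∀ i, b' i < 2)
    (h : (fun i => 2 * a i + b i) = (fun i => 2 * a' i + b' i)) : a = a' ∧ b = b' := by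
  constructor <;> funext i <;>
    · have h0 := congrFun h i
      have h1 := hb i
      have h2 := hb' i
      omega

def JIdx (n : ℕ) : Type := Σ k : ℕ, {a : Fin n → ℕ // a ∈ rem n k}

instance (n : ℕ) : Countable (JIdx n) := by
  unfold JIdx; infer_instance

lemma JIdx_infinite {n : ℕ} (hn : 2 ≤ n) : Infinite (JIdx n) := by
  refine Infinite.of_injective
    (fun k : ℕ => (⟨k, ⟨(rem_nonempty hn k).choose, (rem_nonempty hn k).choose_spec⟩⟩ : JIdx n)) ?_
  intro k l h
  exact congrArg Sigma.fst h

/- ===== geometric pieces ===== -/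

lemma gpt_zero (n M : ℕ) : gpt n M (fun _ => 0) = 0 := by
  funext i
  simp [gpt]

lemma gpt_add_tauPt {n M : ℕ} (b : Fin n → ℕ) (j : Fin n) :
    gpt n M b + tauPt M (j : ℕ) = gpt n M (Function.update b j (b j + 1)) := by
  funext i
  simp only [Pi.add_apply, gpt, tauPt]
  by_cases hij : i = (j : ℕ)
  · subst hij
    rw [dif_pos j.isLt, dif_pos j.isLt, if_pos rfl]
    have hfin : (⟨(j:ℕ), j.isLt⟩ : Fin n) = j := Fin.eta j j.isLt
    rw [hfin, Function.update_self]
    rw [← AddCircle.coe_add]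
    congr 1
    push_cast
    ring
  · rw [if_neg hij]
    by_cases h : i < n
    · rw [dif_pos h, dif_pos h, add_zero]
      congr 2
      rw [Function.update_of_ne]
      intro hc
      apply hij
      rw [← hc]
    · rw [dif_neg h, dif_neg h, add_zero]

lemma vadd_sack_eq {n M : ℕ} (y : Tomega) :
    y +ᵥ sack M n (cubeSet M n) =
      (y +ᵥ cubeSet M n) ∪ ⋃ j : Fin n, (y + tauPt M (j:ℕ)) +ᵥ cubeSet M n := by
  rw [sack, Set.vadd_set_union]
  congr 1
  have h1 : (⋃ j, ⋃ (_ : j < n), tauPt M j +ᵥ cubeSet M n)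
      = ⋃ j : Fin n, tauPt M (j:ℕ) +ᵥ cubeSet M n := by
    ext x
    simp only [Set.mem_iUnion]
    constructor
    · rintro ⟨j, hj, h⟩; exact ⟨⟨j, hj⟩, h⟩
    · rintro ⟨j, h⟩; exact ⟨j, j.isLt, h⟩
  rw [h1, Set.vadd_set_iUnion]
  exact Set.iUnion_congr fun j => vadd_vadd y (tauPt M (j:ℕ)) (cubeSet M n)

lemma cube_sub_Dset {n M : ℕ} {b : Fin n → ℕ} (hb : ∀ i, b i + 1 ≤ 2^M) :
    gpt n M b +ᵥ cubeSet M n ⊆ Dset n M b := by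
  intro x hx
  rw [mem_gpt_vadd_cube hb] at hx
  intro i
  exact ⟨le_of_lt (hx i).1, (hx i).2⟩

lemma Dset_sub {n M : ℕ} {a b : Fin n → ℕ} (h : ∀ i, 2 * a i ≤ b i ∧ b i + 1 ≤ 2 * a i + 2) :
    Dset n (M+1) b ⊆ Dset n M a := by
  intro x hx i
  obtain ⟨h1, h2⟩ := hx i
  have hδ : ((2:ℝ)^(M+1))⁻¹ = ((2:ℝ)^M)⁻¹ / 2 := by
    rw [pow_succ, mul_inv, div_eq_mul_inv]
  have hp : (0:ℝ) < ((2:ℝ)^M)⁻¹ := by positivity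
  have hl : ((2 * a i : ℕ) : ℝ) ≤ (b i : ℝ) := by exact_mod_cast (h i).1
  have hr : ((b i : ℝ) + 1) ≤ ((2 * a i + 2 : ℕ) : ℝ) := by exact_mod_cast (h i).2
  push_cast at hl hr
  rw [hδ] at h1 h2
  constructor
  · nlinarith
  · nlinarith

lemma cube_measurable {n M : ℕ} {b : Fin n → ℕ} (hb : ∀ i, b i + 1 ≤ 2^M) :
    MeasurableSet (gpt n M b +ᵥ cubeSet M n) := by
  have : gpt n M b +ᵥ cubeSet M n = ⋂ i : Fin n,
      (fun x : Tomega => repc (x (i:ℕ))) ⁻¹' (Set.Ioo ((b i : ℝ) * ((2:ℝ)^M)⁻¹) (((b i : ℝ) + 1) * ((2:ℝ)^M)⁻¹)) := by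
    ext x
    rw [mem_gpt_vadd_cube hb]
    simp
  rw [this]
  exact MeasurableSet.iInter fun i => measurableSet_Ioo.preimage
    (repc_measurable.comp (measurable_pi_apply _))

/- ===== the recursive construction ===== -/

def c2 {n : ℕ} (a : Fin n → ℕ) : Fin n → ℕ := fun i => 2 * a i

def updc {n : ℕ} (a : Fin n → ℕ) (j : Fin n) : Fin n → ℕ :=
  Function.update (fun i => 2 * a i) j (2 * a j + 1)

def pcube (n M : ℕ) (c : Fin n → ℕ) : Set Tomega := gpt n M c +ᵥ cubeSet M n

def sackTr (n k : ℕ) (a : Fin n → ℕ) : Set Tomega :=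
  gpt n (n-1+k+1) (c2 a) +ᵥ sack (n-1+k+1) n (cubeSet (n-1+k+1) n)

def RemSet (n k : ℕ) : Set Tomega := ⋃ a ∈ rem n k, Dset n (n-1+k) a

lemma updc_eq {n : ℕ} (a : Fin n → ℕ) (j : Fin n) :
    updc a j = fun i => 2 * a i + (if i = j then 1 else 0) := by
  funext i
  by_cases hij : i = j
  · subst hij; rw [updc, Function.update_self, if_pos rfl]
  · rw [updc, Function.update_of_ne hij, if_neg hij, add_zero]

lemma sackTr_eq {n k : ℕ} (a : Fin n → ℕ) :
    sackTr n k a = pcube n (n-1+k+1) (c2 a) ∪ ⋃ j : Fin n, pcube n (n-1+k+1) (updc a j) := by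
  rw [sackTr, vadd_sack_eq]
  congr 1
  exact Set.iUnion_congr fun j => by rw [pcube, gpt_add_tauPt]; rfl

lemma c2_bound {n k : ℕ} {a : Fin n → ℕ} (ha : a ∈ rem n k) :
    ∀ i, c2 a i + 1 ≤ 2^(n-1+k+1) := by
  intro i
  have h1 := rem_lt k a ha i
  have h2 : (2:ℕ)^(n-1+k+1) = 2^(n-1+k) * 2 := pow_succ 2 (n-1+k)
  rw [h2]
  show 2 * a i + 1 ≤ _
  omega

lemma updc_bound {n k : ℕ} {a : Fin n → ℕ} (ha : a ∈ rem n k) (j : Fin n) :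
    ∀ i, updc a j i + 1 ≤ 2^(n-1+k+1) := by
  intro i
  have h1 := rem_lt k a ha i
  have h2 : (2:ℕ)^(n-1+k+1) = 2^(n-1+k) * 2 := pow_succ 2 (n-1+k)
  rw [updc_eq, h2]
  show 2 * a i + (if i = j then 1 else 0) + 1 ≤ _
  split <;> omega

lemma sackTr_measurable {n k : ℕ} {a : Fin n → ℕ} (ha : a ∈ rem n k) :
    MeasurableSet (sackTr n k a) := by
  rw [sackTr_eq]
  exact (cube_measurable (c2_bound ha)).union
    (MeasurableSet.iUnion fun j => cube_measurable (updc_bound ha j))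

lemma sack_sub_parent {n k : ℕ} {a : Fin n → ℕ} (ha : a ∈ rem n k) :
    sackTr n k a ⊆ Dset n (n-1+k) a := by
  rw [sackTr_eq]
  apply Set.union_subset
  · refine (cube_sub_Dset (c2_bound ha)).trans (Dset_sub ?_)
    intro i; exact ⟨le_refl _, by show 2 * a i + 1 ≤ _; omega⟩
  · apply Set.iUnion_subset
    intro j
    refine (cube_sub_Dset (updc_bound ha j)).trans (Dset_sub ?_)
    intro i
    rw [updc_eq]
    constructor
    · show 2 * a i ≤ 2 * a i + _; omega
    · show 2 * a i + (if i = j then 1 else 0) + 1 ≤ _; split <;> omega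

lemma corner_not_mem {n k : ℕ} {a : Fin n → ℕ} (ha : a ∈ rem n k)
    {ε : Fin n → ℕ} (hε : ∀ i, ε i < 2) (hεs : ∑ i, ε i < 2) :
    (fun i => 2 * a i + ε i) ∉ rem n (k+1) := by
  intro hmem
  rw [rem, Finset.mem_image] at hmem
  obtain ⟨⟨a', b''⟩, hm, heq⟩ := hmem
  rw [Finset.mem_product] at hm
  obtain ⟨hb2, hbs⟩ := childOK_mem.mp hm.2
  obtain ⟨-, hbe⟩ := rem_eq_of_child hb2 hε heq
  rw [hbe] at hbs
  omega

lemma sack_disj_rem {n k : ℕ} {a : Fin n → ℕ} (ha : a ∈ rem n k) :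
    Disjoint (sackTr n k a) (RemSet n (k+1)) := by
  rw [Set.disjoint_left]
  intro x hxs hxr
  obtain ⟨b, hb, hxb⟩ : ∃ b ∈ rem n (k+1), x ∈ Dset n (n-1+(k+1)) b := by
    simpa [RemSet, Set.mem_iUnion] using hxr
  have hxc : ∃ c : Fin n → ℕ, (∃ ε : Fin n → ℕ, (∀ i, ε i < 2) ∧ (∑ i, ε i < 2) ∧
      c = fun i => 2 * a i + ε i) ∧ x ∈ Dset n (n-1+k+1) c := by
    rw [sackTr_eq] at hxs
    rcases hxs with h | h
    · exact ⟨c2 a, ⟨fun _ => 0, fun i => by norm_num, by simp, by funext i; simp [c2]⟩,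
        cube_sub_Dset (c2_bound ha) h⟩
    · obtain ⟨j, hj⟩ := Set.mem_iUnion.mp h
      refine ⟨updc a j, ⟨fun i => if i = j then 1 else 0,
        fun i => by by_cases hij : i = j <;> simp [hij], ?_, updc_eq a j⟩,
        cube_sub_Dset (updc_bound ha j) hj⟩
      calc (∑ i, if i = j then 1 else 0) = 1 := by simp
        _ < 2 := one_lt_two
  obtain ⟨c, ⟨ε, hε, hεs, hc⟩, hxDc⟩ := hxc
  have hne : c ≠ b := by
    intro h
    exact corner_not_mem ha hε hεs (by rw [← hc, h]; exact hb)
  exact Set.disjoint_left.mp (Dset_disjoint hne) hxDc hxb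

lemma Rem_mono {n : ℕ} (k : ℕ) : RemSet n (k+1) ⊆ RemSet n k := by
  intro x hx
  obtain ⟨b, hb, hxb⟩ : ∃ b ∈ rem n (k+1), x ∈ Dset n (n-1+(k+1)) b := by
    simpa [RemSet, Set.mem_iUnion] using hx
  rw [rem, Finset.mem_image] at hb
  obtain ⟨⟨a', b''⟩, hm, heq⟩ := hb
  rw [Finset.mem_product] at hm
  obtain ⟨hb2, _⟩ := childOK_mem.mp hm.2
  have hsub : Dset n (n-1+k+1) b ⊆ Dset n (n-1+k) a' := by
    apply Dset_sub
    intro i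
    have h1 : 2 * a' i + b'' i = b i := congrFun heq i
    have h2 : b'' i < 2 := hb2 i
    omega
  exact Set.mem_biUnion hm.1 (hsub hxb)

lemma Rem_le {n : ℕ} {k l : ℕ} (h : k ≤ l) : RemSet n l ⊆ RemSet n k := by
  induction l with
  | zero => rw [Nat.le_zero.mp h]
  | succ l ih =>
    rcases Nat.lt_or_ge k (l+1) with h' | h'
    · exact (Rem_mono l).trans (ih (by omega))
    · rw [show k = l+1 from by omega]

lemma RemSet_zero {n : ℕ} : RemSet n 0 = Set.univ := by
  apply Set.eq_univ_of_forall
  intro x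
  obtain ⟨a, ha, hxa⟩ := Dset_cover n (n-1) x
  exact Set.mem_biUnion (show a ∈ rem n 0 from ha) hxa

lemma sackTr_pairwise {n : ℕ} (s t : JIdx n) (hst : s ≠ t) :
    Disjoint (sackTr n s.1 s.2.1) (sackTr n t.1 t.2.1) := by
  have key : ∀ (s t : JIdx n), s.1 < t.1 →
      Disjoint (sackTr n s.1 s.2.1) (sackTr n t.1 t.2.1) := by
    intro s t h
    refine Disjoint.mono_right ?_ (sack_disj_rem s.2.2)
    refine (sack_sub_parent t.2.2).trans ?_
    refine (Set.subset_biUnion_of_mem (u := fun a => Dset n (n-1+t.1) a) t.2.2).trans ?_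
    exact Rem_le (show s.1 + 1 ≤ t.1 from h)
  rcases lt_trichotomy s.1 t.1 with h | h | h
  · exact key s t h
  · obtain ⟨k, a⟩ := s; obtain ⟨l, b⟩ := t
    simp only at h
    subst h
    have hab : (a : Fin n → ℕ) ≠ (b : Fin n → ℕ) := by
      intro hc
      exact hst (by rw [Subtype.ext hc])
    exact Disjoint.mono (sack_sub_parent a.2) (sack_sub_parent b.2) (Dset_disjoint hab)
  · exact (key t s h).symm


lemma Dset_step {n k : ℕ} (hn : 1 ≤ n) {a : Fin n → ℕ} (ha : a ∈ rem n k) :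
    Dset n (n-1+k) a ⊆ sackTr n k a ∪ RemSet n (k+1) ∪ gridSet := by
  intro x hx
  by_cases hdy : ∃ i : Fin n, ∃ m : ℕ, repc (x (i:ℕ)) = (m : ℝ) * ((2:ℝ)^(n-1+k+1))⁻¹
  · right
    obtain ⟨i, m, hm⟩ := hdy
    refine Set.mem_iUnion.mpr ⟨(i:ℕ), Set.mem_iUnion.mpr ⟨(m : ℚ) / 2^(n-1+k+1), ?_⟩⟩
    show x (i:ℕ) = _
    rw [← coe_repc (x (i:ℕ)), hm]
    congr 1
    push_cast
    rw [div_eq_mul_inv]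
  · push_neg at hdy
    have hδ : ((2:ℝ)^(n-1+k+1))⁻¹ = ((2:ℝ)^(n-1+k))⁻¹ / 2 := by
      rw [pow_succ, mul_inv, div_eq_mul_inv]
    have hp : (0:ℝ) < ((2:ℝ)^(n-1+k))⁻¹ := by positivity
    set b : Fin n → ℕ :=
      fun i => if repc (x (i:ℕ)) < ((2 * a i + 1 : ℕ) : ℝ) * ((2:ℝ)^(n-1+k+1))⁻¹ then 0 else 1 with hbdef
    have hbval : ∀ i, b i = 0 ∨ b i = 1 := by
      intro i; rw [hbdef]; dsimp only; split
      · exact Or.inl rfl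
      · exact Or.inr rfl
    have hblt : ∀ i, b i < 2 := by intro i; rcases hbval i with h | h <;> omega
    have halt : ∀ i, a i < 2^(n-1+k) := rem_lt k a ha
    have hcb : ∀ i : Fin n, (2 * a i + b i) + 1 ≤ 2^(n-1+k+1) := by
      intro i
      have h1 := halt i
      have h2 := hblt i
      rw [pow_succ]
      omega
    have hcube : x ∈ gpt n (n-1+k+1) (fun i => 2 * a i + b i) +ᵥ cubeSet (n-1+k+1) n := by
      rw [mem_gpt_vadd_cube hcb]
      intro i
      obtain ⟨hl, hr⟩ := hx i
      have hne0 : repc (x (i:ℕ)) ≠ ((2 * a i : ℕ) : ℝ) * ((2:ℝ)^(n-1+k+1))⁻¹ := hdy i (2 * a i)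
      have hne1 : repc (x (i:ℕ)) ≠ ((2 * a i + 1 : ℕ) : ℝ) * ((2:ℝ)^(n-1+k+1))⁻¹ := hdy i (2 * a i + 1)
      rcases hbval i with hb0 | hb1
      · have hcase : repc (x (i:ℕ)) < ((2 * a i + 1 : ℕ) : ℝ) * ((2:ℝ)^(n-1+k+1))⁻¹ := by
          by_contra hc
          have : b i = 1 := by rw [hbdef]; dsimp only; rw [if_neg hc]
          omega
        constructor
        · push_cast
          rw [hb0]
          push_cast at hne0 hl
          rw [hδ] at *
          rcases lt_or_eq_of_le (by nlinarith : ((2:ℝ) * a i) * (((2:ℝ)^(n-1+k))⁻¹/2) ≤ repc (x (i:ℕ))) with h | h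
          · linarith
          · exact absurd h.symm (by push_cast at hne0 ⊢; convert hne0 using 2 <;> ring_nf)
        · push_cast
          rw [hb0]
          push_cast at hcase
          linarith
      · have hcase : ¬ repc (x (i:ℕ)) < ((2 * a i + 1 : ℕ) : ℝ) * ((2:ℝ)^(n-1+k+1))⁻¹ := by
          by_contra hc
          have : b i = 0 := by rw [hbdef]; dsimp only; rw [if_pos hc]
          omega
        push_neg at hcase
        constructor
        · push_cast
          rw [hb1]
          push_cast at hcase hne1
          rcases lt_or_eq_of_le hcase with h | h
          · linarith
          · exact absurd h.symm (by convert hne1 using 2 <;> ring_nf)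
        · push_cast
          rw [hb1]
          push_cast at hr
          rw [hδ] at *
          nlinarith
    by_cases hsum : 2 ≤ ∑ i, b i
    · have hmem : (fun i => 2 * a i + b i) ∈ rem n (k+1) := by
        rw [rem, Finset.mem_image]
        exact ⟨⟨a, b⟩, Finset.mem_product.mpr ⟨ha, childOK_mem.mpr ⟨hblt, hsum⟩⟩, rfl⟩
      left; right
      exact Set.mem_biUnion hmem (cube_sub_Dset hcb hcube)
    · push_neg at hsum
      left; left
      rw [sackTr_eq]
      by_cases hz : ∀ i, b i = 0
      · left
        have hc2e : (fun i => 2 * a i + b i) = c2 a := by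
          funext i; rw [hz i, add_zero]; rfl
        rw [hc2e] at hcube
        exact hcube
      · push_neg at hz
        obtain ⟨j, hj⟩ := hz
        have hbj : b j = 1 := by rcases hbval j with h | h <;> omega
        have hbi : ∀ i, i ≠ j → b i = 0 := by
          intro i hij
          by_contra hbi0
          have h1 : b i = 1 := by rcases hbval i with h | h <;> omega
          have h2 : b i + b j ≤ ∑ i, b i := by
            rw [← Finset.sum_pair hij]
            exact Finset.sum_le_sum_of_subset (Finset.subset_univ _)
          omega
        right
        refine Set.mem_iUnion.mpr ⟨j, ?_⟩
        have hupd : (fun i => 2 * a i + b i) = updc a j := by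
          funext i
          by_cases hij : i = j
          · subst hij; rw [hbj, updc, Function.update_self]
          · rw [hbi i hij, updc, Function.update_of_ne hij, add_zero]
        rw [hupd] at hcube
        exact hcube

lemma measure_RemSet_le (μ : Measure Tomega) [μ.IsAddHaarMeasure] [IsProbabilityMeasure μ]
    {n : ℕ} (hn : 1 ≤ n) (k : ℕ) :
    μ (RemSet n k) ≤ (((2^n - 1 : ℕ) : ENNReal) * ((2:ENNReal)^n)⁻¹)^k := by
  have hDb : ∀ a ∈ rem n k, μ (Dset n (n-1+k) a) = ((2:ENNReal)^((n-1+k)*n))⁻¹ := by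
    intro a ha
    exact measure_Dset μ (fun i => by have := rem_lt k a ha i; omega)
  have h1 : μ (RemSet n k) ≤ ((rem n k).card : ENNReal) * ((2:ENNReal)^((n-1+k)*n))⁻¹ := by
    calc μ (RemSet n k) ≤ ∑ a ∈ rem n k, μ (Dset n (n-1+k) a) := measure_biUnion_finset_le _ _
      _ = ((rem n k).card : ENNReal) * ((2:ENNReal)^((n-1+k)*n))⁻¹ := by
          rw [Finset.sum_congr rfl hDb, Finset.sum_const, nsmul_eq_mul]
  refine h1.trans ?_
  have hcard : ((rem n k).card : ENNReal) ≤ ((2^((n-1)*n) * (2^n - 1)^k : ℕ) : ENNReal) := by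
    exact_mod_cast rem_card k
  refine (mul_le_mul_left hcard _).trans ?_
  apply le_of_eq
  have hA0 : ((2:ENNReal)^((n-1)*n)) ≠ 0 := by positivity
  have hAt : ((2:ENNReal)^((n-1)*n)) ≠ ⊤ := by
    exact ENNReal.pow_ne_top (by norm_num)
  have hC0 : ((2:ENNReal)^n)^k ≠ 0 := by positivity
  have hCt : ((2:ENNReal)^n)^k ≠ ⊤ := ENNReal.pow_ne_top (ENNReal.pow_ne_top (by norm_num))
  have hsplit : (2:ENNReal)^((n-1+k)*n) = (2:ENNReal)^((n-1)*n) * ((2:ENNReal)^n)^k := by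
    rw [← pow_mul, ← pow_add]
    congr 1
    ring
  rw [mul_pow, ← ENNReal.inv_pow, Nat.cast_mul, Nat.cast_pow, Nat.cast_pow, Nat.cast_ofNat,
    hsplit, ENNReal.mul_inv (Or.inl hA0) (Or.inl hAt)]
  calc (2:ENNReal)^((n-1)*n) * ((2^n - 1 : ℕ) : ENNReal)^k * (((2:ENNReal)^((n-1)*n))⁻¹ * (((2:ENNReal)^n)^k)⁻¹)
      = ((2:ENNReal)^((n-1)*n) * ((2:ENNReal)^((n-1)*n))⁻¹) * (((2^n - 1 : ℕ) : ENNReal)^k * (((2:ENNReal)^n)^k)⁻¹) := by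
        ring
    _ = ((2^n - 1 : ℕ) : ENNReal)^k * (((2:ENNReal)^n)^k)⁻¹ := by
        rw [ENNReal.mul_inv_cancel hA0 hAt, one_mul]

lemma measure_sackTr (μ : Measure Tomega) [μ.IsAddHaarMeasure] [IsProbabilityMeasure μ]
    {n k : ℕ} {a : Fin n → ℕ} (ha : a ∈ rem n k) :
    μ (sackTr n k a) = ((n : ENNReal) + 1) * μ (cubeSet (n-1+k+1) n) := by
  have hμc : ∀ c : Fin n → ℕ, μ (pcube n (n-1+k+1) c) = μ (cubeSet (n-1+k+1) n) :=
    fun c => measure_vadd _ _ _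
  have he1 : ∀ j : Fin n, updc a j j = 2 * a j + 1 := by
    intro j; rw [updc, Function.update_self]
  have he2 : ∀ j j' : Fin n, j ≠ j' → updc a j' j = 2 * a j := by
    intro j j' hjj; rw [updc, Function.update_of_ne hjj]
  have hd1 : ∀ j : Fin n, c2 a ≠ updc a j := by
    intro j h
    have h0 : c2 a j = updc a j j := congrFun h j
    rw [he1 j] at h0
    have : 2 * a j = 2 * a j + 1 := h0
    omega
  have hd2 : ∀ j j' : Fin n, j ≠ j' → updc a j ≠ updc a j' := by
    intro j j' hjj h
    have h0 : updc a j j = updc a j' j := congrFun h j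
    rw [he1 j, he2 j j' hjj] at h0
    omega
  have hpd : ∀ c c' : Fin n → ℕ, (∀ i, c i + 1 ≤ 2^(n-1+k+1)) → (∀ i, c' i + 1 ≤ 2^(n-1+k+1)) →
      c ≠ c' → Disjoint (pcube n (n-1+k+1) c) (pcube n (n-1+k+1) c') :=
    fun c c' h h' hne => Disjoint.mono (cube_sub_Dset h) (cube_sub_Dset h') (Dset_disjoint hne)
  have hDISJ : Disjoint (pcube n (n-1+k+1) (c2 a)) (⋃ j : Fin n, pcube n (n-1+k+1) (updc a j)) :=
    Set.disjoint_iUnion_right.mpr fun j => hpd _ _ (c2_bound ha) (updc_bound ha j) (hd1 j)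
  have hMEAS : MeasurableSet (⋃ j : Fin n, pcube n (n-1+k+1) (updc a j)) :=
    MeasurableSet.iUnion fun j => cube_measurable (updc_bound ha j)
  have hpd2 : Pairwise (Function.onFun Disjoint (fun j : Fin n => pcube n (n-1+k+1) (updc a j))) :=
    fun j j' hjj => hpd _ _ (updc_bound ha j) (updc_bound ha j') (hd2 j j' hjj)
  have hU : μ (⋃ j : Fin n, pcube n (n-1+k+1) (updc a j)) = (n : ENNReal) * μ (cubeSet (n-1+k+1) n) := by
    rw [measure_iUnion (f := fun j : Fin n => pcube n (n-1+k+1) (updc a j)) hpd2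
      (fun j => cube_measurable (updc_bound ha j))]
    rw [tsum_fintype]
    rw [Finset.sum_congr rfl (fun j _ => hμc (updc a j))]
    rw [Finset.sum_const, Finset.card_univ, Fintype.card_fin, nsmul_eq_mul]
  rw [sackTr_eq, measure_union hDISJ hMEAS, hU, hμc (c2 a)]
  ring


/- ===== numerics ===== -/

lemma jessen_numeric (n : ℕ) (hn : 2 ≤ n) :
    (∑' k : ℕ, (((2 : ℝ) ^ n - (n + 1)) / 2 ^ n) ^ k) *
        ((2 : ℝ) ^ (n * (n - 1)) / 2 ^ (n ^ 2)) = 1 / (n + 1) := by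
  have h2n : (0:ℝ) < 2^n := by positivity
  have hnp : (n:ℝ) + 1 ≤ 2^n := by
    have := Nat.lt_two_pow_self (n := n)
    exact_mod_cast Nat.succ_le_of_lt this
  have hn1 : (0:ℝ) < (n:ℝ) + 1 := by positivity
  set r : ℝ := ((2:ℝ)^n - (n+1)) / 2^n with hr
  have hr0 : 0 ≤ r := by
    apply div_nonneg _ (le_of_lt h2n)
    linarith
  have hr1 : r < 1 := by
    rw [hr, div_lt_one h2n]
    linarith
  rw [tsum_geometric_of_lt_one hr0 hr1]
  have h1r : 1 - r = ((n:ℝ) + 1) / 2^n := by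
    rw [hr]
    field_simp
    ring
  rw [h1r]
  have hpow : (2:ℝ)^(n^2) = 2^(n*(n-1)) * 2^n := by
    rw [← pow_add]
    congr 1
    obtain ⟨m, rfl⟩ : ∃ m, n = m + 1 := ⟨n - 1, by omega⟩
    simp only [Nat.add_sub_cancel]
    ring
  rw [hpow]
  have hA : (0:ℝ) < 2^(n*(n-1)) := by positivity
  field_simp

end JessenAux
/-- **Jessen-type construction at scale `n ≥ 2`.** There is a countable family of pairwise
disjoint translated cubes `Q_k = y k + □_{M k, n}` (with `M k ≥ n`) whose sacks are also
pairwise disjoint, such that the union `C_n = ⋃ Q_k` has measure `1/(n+1)` and the complement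
`N_n` of the union of the sacks is a null set; moreover the geometric series of the
construction gives `2^{n(n−1)} · 2^{−n²} · ∑_k ((2^n − (n+1))/2^n)^k = 1/(n+1)`. -/
theorem jessen_construction (μ : Measure Tomega) [μ.IsAddHaarMeasure]
    [IsProbabilityMeasure μ] (n : ℕ) (hn : 2 ≤ n) :
    (∃ (y : ℕ → Tomega) (M : ℕ → ℕ),
      (∀ k, n ≤ M k) ∧
      (Pairwise fun k l => Disjoint (y k +ᵥ sack (M k) n (cubeSet (M k) n))
        (y l +ᵥ sack (M l) n (cubeSet (M l) n))) ∧
      μ (⋃ k, y k +ᵥ cubeSet (M k) n) = ((n : ENNReal) + 1)⁻¹ ∧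
      μ (⋃ k, y k +ᵥ sack (M k) n (cubeSet (M k) n))ᶜ = 0) ∧
    (∑' k : ℕ, (((2 : ℝ) ^ n - (n + 1)) / 2 ^ n) ^ k) *
        ((2 : ℝ) ^ (n * (n - 1)) / 2 ^ (n ^ 2)) = 1 / (n + 1) := by
  classical
  refine ⟨?_, jessen_numeric n hn⟩
  haveI hinf : Infinite (JIdx n) := JIdx_infinite hn
  haveI henc : Encodable (JIdx n) := Encodable.ofCountable _
  haveI hden : Denumerable (JIdx n) := Denumerable.ofEncodableOfInfinite _
  set e : ℕ ≃ JIdx n := (Denumerable.eqv (JIdx n)).symm with he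
  set S : JIdx n → Set Tomega := fun s => sackTr n s.1 s.2.1 with hS
  set C : JIdx n → Set Tomega := fun s => gpt n (n-1+s.1+1) (c2 s.2.1) +ᵥ cubeSet (n-1+s.1+1) n with hC
  have hmeasS : ∀ s : JIdx n, MeasurableSet (S s) := fun s => sackTr_measurable s.2.2
  have hmeasC : ∀ s : JIdx n, MeasurableSet (C s) := fun s => cube_measurable (c2_bound s.2.2)
  have hCsubS : ∀ s : JIdx n, C s ⊆ S s := by
    intro s
    intro x hx
    show x ∈ sackTr n s.1 s.2.1
    rw [sackTr_eq]
    exact Or.inl hx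
  have hSdisj : Pairwise (Function.onFun Disjoint S) := fun s t hst => sackTr_pairwise s t hst
  have hCdisj : Pairwise (Function.onFun Disjoint C) := fun s t hst =>
    Disjoint.mono (hCsubS s) (hCsubS t) (hSdisj hst)
  -- complement of the union of all sacks is null
  have hsub : ∀ k, (⋃ s : JIdx n, S s)ᶜ ⊆ RemSet n k ∪ gridSet := by
    intro k
    induction k with
    | zero =>
      intro x _
      left
      rw [RemSet_zero]
      trivial
    | succ k ih =>
      intro x hx
      rcases ih hx with hrem | hg
      · obtain ⟨a, ha, hxa⟩ : ∃ a ∈ rem n k, x ∈ Dset n (n-1+k) a := by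
          simpa [RemSet, Set.mem_iUnion] using hrem
        rcases Dset_step (by omega) ha hxa with hmid | hgr
        · rcases hmid with hsk | hr
          · exact absurd (Set.mem_iUnion.mpr ⟨⟨k, ⟨a, ha⟩⟩, hsk⟩) hx
          · left; exact hr
        · right; exact hgr
      · right; exact hg
  set q : ENNReal := ((2^n - 1 : ℕ) : ENNReal) * ((2:ENNReal)^n)⁻¹ with hq
  have hbound : ∀ k, μ ((⋃ s : JIdx n, S s)ᶜ) ≤ q^k := by
    intro k
    refine (measure_mono (hsub k)).trans ?_
    refine (measure_union_le _ _).trans ?_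
    rw [grid_null μ, add_zero]
    exact measure_RemSet_le μ (by omega) k
  have hq1 : q < 1 := by
    rw [hq]
    have hC0 : ((2:ENNReal)^n) ≠ 0 := by positivity
    have hCt : ((2:ENNReal)^n) ≠ ⊤ := ENNReal.pow_ne_top (by norm_num)
    have hlt : ((2^n - 1 : ℕ) : ENNReal) < (2:ENNReal)^n := by
      have h1 : ((2^n - 1 : ℕ) : ENNReal) < ((2^n : ℕ) : ENNReal) := by
        exact_mod_cast Nat.sub_lt (by positivity) one_pos
      calc ((2^n - 1 : ℕ) : ENNReal) < ((2^n : ℕ) : ENNReal) := h1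
        _ = (2:ENNReal)^n := by push_cast; rfl
    calc ((2^n - 1 : ℕ) : ENNReal) * ((2:ENNReal)^n)⁻¹
        < (2:ENNReal)^n * ((2:ENNReal)^n)⁻¹ :=
          ENNReal.mul_lt_mul_left (ENNReal.inv_ne_zero.mpr hCt) (ENNReal.inv_ne_top.mpr hC0) hlt
      _ = 1 := ENNReal.mul_inv_cancel hC0 hCt
  have hcompl : μ ((⋃ s : JIdx n, S s)ᶜ) = 0 := by
    have htend : Filter.Tendsto (fun k : ℕ => q^k) Filter.atTop (nhds 0) :=
      ENNReal.tendsto_pow_atTop_nhds_zero_of_lt_one hq1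
    exact le_antisymm (ge_of_tendsto' htend hbound) zero_le
  have hmUS : MeasurableSet (⋃ s : JIdx n, S s) := MeasurableSet.iUnion hmeasS
  have hSfull : μ (⋃ s : JIdx n, S s) = 1 := by
    have h1 := measure_compl hmUS (measure_ne_top μ _)
    rw [hcompl, measure_univ] at h1
    have h2 : (1:ENNReal) ≤ μ (⋃ s : JIdx n, S s) := tsub_eq_zero_iff_le.mp h1.symm
    exact le_antisymm prob_le_one h2
  have hsumS : ∑' s : JIdx n, μ (S s) = 1 := by
    rw [← measure_iUnion hSdisj hmeasS]
    exact hSfull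
  have hSC : ∀ s : JIdx n, μ (S s) = ((n : ENNReal) + 1) * μ (C s) := by
    intro s
    show μ (sackTr n s.1 s.2.1) = _
    rw [measure_sackTr μ s.2.2]
    congr 1
    exact (measure_vadd _ _ _).symm
  have hsumC : ∑' s : JIdx n, μ (C s) = ((n : ENNReal) + 1)⁻¹ := by
    have hX : ((n : ENNReal) + 1) * ∑' s : JIdx n, μ (C s) = 1 := by
      rw [← ENNReal.tsum_mul_left]
      rw [tsum_congr (fun s => (hSC s).symm)]
      exact hsumS
    have h := ENNReal.eq_inv_of_mul_eq_one_left hX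
    rw [← inv_inv (∑' s : JIdx n, μ (C s)), ← h]
  refine ⟨fun t => gpt n (n-1+(e t).1+1) (c2 (e t).2.1), fun t => n-1+(e t).1+1, ?_, ?_, ?_, ?_⟩
  · intro k
    show n ≤ n - 1 + (e k).1 + 1
    omega
  · intro t t' htt
    show Disjoint (S (e t)) (S (e t'))
    exact hSdisj (fun hc => htt (e.injective hc))
  · show μ (⋃ t : ℕ, C (e t)) = ((n : ENNReal) + 1)⁻¹
    rw [e.surjective.iUnion_comp C]
    rw [measure_iUnion hCdisj hmeasC]
    exact hsumC
  · show μ ((⋃ t : ℕ, S (e t))ᶜ) = 0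
    rw [e.surjective.iUnion_comp S]
    exact hcompl
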